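/- arXiv:2303.09961 — 2 statements merged into one kernel-verified Lean document; each statement's English description precedes it below -/
import Mathlib

section
/- Let (φ_t) be a non-elliptic semigroup in 𝔻 with Denjoy–Wolff point τ ∈ ∂𝔻 and Koenigs function h, and let Δ be a parabolic petal of (φ_t), i.e., h(Δ) is a maximal horizontal half-plane in Ω = h(𝔻). Fix z ∈ Δ and let η : (−1,1) → 𝔻 be a geodesic of 𝔻 with η(0) = z and lim_{r→1⁻} η(r) = τ. Then lim_{t→−∞} v^o_Δ(t)/t = 0 and lim_{t→−∞} v^T_Δ(t)/t = 0, where v^o_Δ(t) := d_𝔻(z, π_η(φ_t(z))) and v^T_Δ(t) := inf_{r ∈ (−1,1)} d_𝔻(φ_t(z), η(r)) for t ≤ 0. -/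
open Filter Set

/-- The inverse hyperbolic tangent. -/
noncomputable def arctanh (x : ℝ) : ℝ := (1 / 2) * Real.log ((1 + x) / (1 - x))

/-- The hyperbolic distance of the unit disc:
`d_𝔻(z, w) = arctanh |(z - w)/(1 - conj z · w)|`. -/
noncomputable def dD (z w : ℂ) : ℝ :=
  arctanh ‖(z - w) / (1 - (starRingEnd ℂ) z * w)‖

def unitDisc : Set ℂ := {z : ℂ | ‖z‖ < 1}

/-- A one-parameter semigroup of holomorphic self-maps of the unit disc
(which is not a group): `φ 0 = id`, the semigroup property holds for
nonnegative times, and `φ t → id` locally uniformly as `t → 0⁺`. -/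
structure IsSemigroupD (φ : ℝ → ℂ → ℂ) : Prop where
  mapsTo : ∀ t : ℝ, 0 ≤ t → Set.MapsTo (φ t) unitDisc unitDisc
  holo : ∀ t : ℝ, 0 ≤ t → DifferentiableOn ℂ (φ t) unitDisc
  id0 : ∀ z ∈ unitDisc, φ 0 z = z
  comp : ∀ s t : ℝ, 0 ≤ s → 0 ≤ t → ∀ z ∈ unitDisc, φ (s + t) z = φ s (φ t z)
  cont0 : TendstoLocallyUniformlyOn (fun t : ℝ => φ t) id (nhdsWithin 0 (Set.Ioi 0)) unitDisc
  notGroup : ∃ t : ℝ, 0 < t ∧ ¬ Set.BijOn (φ t) unitDisc unitDisc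

/-- The backward invariant set `W = ⋂_{t ≥ 0} φ_t(𝔻)`. -/
def backwardInvSet (φ : ℝ → ℂ → ℂ) : Set ℂ :=
  ⋂ t ∈ Set.Ici (0 : ℝ), φ t '' unitDisc

/-- A petal: a nonempty connected component of the interior of the backward invariant set. -/
def IsPetal (φ : ℝ → ℂ → ℂ) (Δ : Set ℂ) : Prop :=
  Δ.Nonempty ∧ ∃ z ∈ interior (backwardInvSet φ),
    Δ = connectedComponentIn (interior (backwardInvSet φ)) z

/-- A geodesic of the unit disc, parametrized by `(-1, 1)`. -/
structure IsGeodesicD (η : ℝ → ℂ) : Prop where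
  mem : ∀ r ∈ Set.Ioo (-1 : ℝ) 1, η r ∈ unitDisc
  cont : ContinuousOn η (Set.Ioo (-1 : ℝ) 1)
  inj : Set.InjOn η (Set.Ioo (-1 : ℝ) 1)
  geo : ∀ r₁ r₂ r₃ : ℝ, -1 < r₁ → r₁ ≤ r₂ → r₂ ≤ r₃ → r₃ < 1 →
    dD (η r₁) (η r₃) = dD (η r₁) (η r₂) + dD (η r₂) (η r₃)
  endPlus : ∃ b : ℂ, ‖b‖ = 1 ∧
    Filter.Tendsto η (nhdsWithin 1 (Set.Iio 1)) (nhds b)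
  endMinus : ∃ a : ℂ, ‖a‖ = 1 ∧
    Filter.Tendsto η (nhdsWithin (-1) (Set.Ioi (-1))) (nhds a)

/-- `inf_{r ∈ (-1,1)} d_𝔻(u, η r)`, the hyperbolic distance from `u` to the geodesic `η`. -/
noncomputable def geoDist (η : ℝ → ℂ) (u : ℂ) : ℝ :=
  ⨅ r : Set.Ioo (-1 : ℝ) 1, dD u (η r.1)

/-- `p` is a projection `π_η(u)` of `u` onto the geodesic `η`. -/
def IsProj (η : ℝ → ℂ) (u p : ℂ) : Prop :=
  (∃ r ∈ Set.Ioo (-1 : ℝ) 1, p = η r) ∧ dD u p = geoDist η u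

/-- `τ ∈ ∂𝔻` is the Denjoy–Wolff point of `φ` (non-elliptic case). -/
def IsDenjoyWolffBoundary (φ : ℝ → ℂ → ℂ) (τ : ℂ) : Prop :=
  ‖τ‖ = 1 ∧ ∀ z ∈ unitDisc, Filter.Tendsto (fun t => φ t z) Filter.atTop (nhds τ)

/-- The Koenigs function of a non-elliptic semigroup. -/
structure IsKoenigsNE (φ : ℝ → ℂ → ℂ) (h : ℂ → ℂ) : Prop where
  holo : DifferentiableOn ℂ h unitDisc
  inj : Set.InjOn h unitDisc
  zero : h 0 = 0
  semiconj : ∀ t : ℝ, 0 ≤ t → ∀ z ∈ unitDisc, h (φ t z) = h z + (t : ℂ)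

/-- A horizontal half-plane `{Im z > a}` or `{Im z < a}`. -/
def IsHorizHalfPlane (H : Set ℂ) : Prop :=
  ∃ a : ℝ, H = {z : ℂ | a < z.im} ∨ H = {z : ℂ | z.im < a}

/-- `Δ` is a parabolic petal: a petal whose image `h(Δ)` is a maximal horizontal
half-plane contained in `Ω = h(𝔻)`. -/
def IsParabolicPetal (φ : ℝ → ℂ → ℂ) (h : ℂ → ℂ) (Δ : Set ℂ) : Prop :=
  IsPetal φ Δ ∧ IsHorizHalfPlane (h '' Δ) ∧ h '' Δ ⊆ h '' unitDisc ∧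
  ∀ H : Set ℂ, IsHorizHalfPlane H → h '' Δ ⊂ H → ¬ H ⊆ h '' unitDisc

open Complex

lemma my_normSq_identity (z w : ℂ) :
    normSq (1 - (starRingEnd ℂ) z * w) - normSq (z - w) = (1 - normSq z) * (1 - normSq w) := by
  simp only [normSq_apply, sub_re, sub_im, mul_re, mul_im, conj_re, conj_im, one_re, one_im]
  ring

lemma my_normSq_lt_one {z : ℂ} (hz : z ∈ unitDisc) : normSq z < 1 := by
  have : ‖z‖ < 1 := hz
  rw [normSq_eq_norm_sq]
  nlinarith [norm_nonneg z]

lemma my_normSq_pos_sub {z w : ℂ} (hz : z ∈ unitDisc) (hw : w ∈ unitDisc) :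
    normSq (z - w) < normSq (1 - (starRingEnd ℂ) z * w) := by
  have h1 := my_normSq_identity z w
  nlinarith [my_normSq_lt_one hz, my_normSq_lt_one hw]

lemma my_one_sub_ne {z w : ℂ} (hz : z ∈ unitDisc) (hw : w ∈ unitDisc) :
    1 - (starRingEnd ℂ) z * w ≠ 0 := by
  intro h
  have := my_normSq_pos_sub hz hw
  rw [h, map_zero] at this
  exact (normSq_nonneg (z - w)).not_gt this

/-- pseudo-hyperbolic distance -/
noncomputable def rho (z w : ℂ) : ℝ := ‖(z - w) / (1 - (starRingEnd ℂ) z * w)‖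

lemma dD_eq (z w : ℂ) : dD z w = arctanh (rho z w) := rfl

lemma rho_nonneg (z w : ℂ) : 0 ≤ rho z w := norm_nonneg _

lemma rho_lt_one {z w : ℂ} (hz : z ∈ unitDisc) (hw : w ∈ unitDisc) : rho z w < 1 := by
  have hne := my_one_sub_ne hz hw
  have hpos : 0 < ‖1 - (starRingEnd ℂ) z * w‖ := by
    simpa [norm_pos_iff] using hne
  rw [rho, norm_div, div_lt_one hpos]
  have := my_normSq_pos_sub hz hw
  rw [normSq_eq_norm_sq, normSq_eq_norm_sq] at this
  nlinarith [norm_nonneg (z - w), norm_nonneg (1 - (starRingEnd ℂ) z * w)]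

lemma rho_symm (z w : ℂ) : rho z w = rho w z := by
  unfold rho
  rw [norm_div, norm_div]
  congr 1
  · exact norm_sub_rev z w
  · rw [← Complex.norm_conj (1 - (starRingEnd ℂ) w * z)]
    congr 1
    simp only [map_sub, map_one, map_mul, Complex.conj_conj]
    ring

lemma rho_zero_right (z : ℂ) : rho z 0 = ‖z‖ := by simp [rho]

/-- Möbius automorphism -/
noncomputable def mob (a u : ℂ) : ℂ := (a - u) / (1 - (starRingEnd ℂ) a * u)

lemma abs_mob (a u : ℂ) : ‖mob a u‖ = rho a u := rfl

lemma mob_mem {a u : ℂ} (ha : a ∈ unitDisc) (hu : u ∈ unitDisc) : mob a u ∈ unitDisc :=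
  rho_lt_one ha hu

lemma mob_self (a : ℂ) : mob a a = 0 := by simp [mob]

lemma rho_mob_invariant {a u v : ℂ} (ha : a ∈ unitDisc) (hu : u ∈ unitDisc) (hv : v ∈ unitDisc) :
    rho (mob a u) (mob a v) = rho u v := by
  have hau := my_one_sub_ne ha hu
  have hav := my_one_sub_ne ha hv
  have huv := my_one_sub_ne hu hv
  have hau' : 1 - a * (starRingEnd ℂ) u ≠ 0 := by
    intro h; apply hau
    have := congrArg (starRingEnd ℂ) h
    simpa [map_sub, map_mul] using this
  have haa : (1 : ℂ) - (starRingEnd ℂ) a * a ≠ 0 := my_one_sub_ne ha ha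
  have key1 : mob a u - mob a v = (v - u) * (1 - (starRingEnd ℂ) a * a) /
      ((1 - (starRingEnd ℂ) a * u) * (1 - (starRingEnd ℂ) a * v)) := by
    unfold mob; rw [div_sub_div _ _ hau hav]; congr 1; ring
  have hconj : (starRingEnd ℂ) (mob a u) = ((starRingEnd ℂ) a - (starRingEnd ℂ) u) /
      (1 - a * (starRingEnd ℂ) u) := by
    unfold mob; rw [map_div₀]; simp [map_sub, map_mul]
  have key2 : 1 - (starRingEnd ℂ) (mob a u) * mob a v =
      (1 - (starRingEnd ℂ) u * v) * (1 - (starRingEnd ℂ) a * a) /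
      ((1 - a * (starRingEnd ℂ) u) * (1 - (starRingEnd ℂ) a * v)) := by
    rw [hconj]; unfold mob
    rw [div_mul_div_comm, one_sub_div (mul_ne_zero hau' hav)]
    congr 1
    ring
  unfold rho
  rw [key1, key2]
  rw [norm_div, norm_div, norm_div, norm_mul, norm_mul, norm_mul, norm_mul]
  have e1 : ‖1 - a * (starRingEnd ℂ) u‖ = ‖1 - (starRingEnd ℂ) a * u‖ := by
    rw [← Complex.norm_conj (1 - (starRingEnd ℂ) a * u)]
    congr 1
    simp only [map_sub, map_one, map_mul, Complex.conj_conj]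
  have p1 : (0:ℝ) < ‖1 - (starRingEnd ℂ) a * u‖ := by simpa [norm_pos_iff] using hau
  have p2 : (0:ℝ) < ‖1 - (starRingEnd ℂ) a * v‖ := by simpa [norm_pos_iff] using hav
  have p3 : (0:ℝ) < ‖1 - (starRingEnd ℂ) u * v‖ := by simpa [norm_pos_iff] using huv
  have p4 : (0:ℝ) < ‖1 - (starRingEnd ℂ) a * a‖ := by simpa [norm_pos_iff] using haa
  rw [e1]
  rw [norm_sub_rev v u]
  rw [div_div_div_cancel_right₀ (by positivity), mul_div_mul_right _ _ p4.ne', norm_div]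
lemma arctanh_nonneg' {x : ℝ} (h0 : 0 ≤ x) (h1 : x < 1) : 0 ≤ arctanh x := by
  unfold arctanh
  have h : (1:ℝ) ≤ (1+x)/(1-x) := by rw [le_div_iff₀ (by linarith)]; linarith
  have := Real.log_nonneg h
  linarith

lemma arctanh_le_arctanh {x y : ℝ} (h0 : 0 ≤ x) (hxy : x ≤ y) (h1 : y < 1) :
    arctanh x ≤ arctanh y := by
  unfold arctanh
  have hx1 : x < 1 := lt_of_le_of_lt hxy h1
  have hlog : Real.log ((1+x)/(1-x)) ≤ Real.log ((1+y)/(1-y)) := by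
    apply Real.log_le_log (div_pos (by linarith) (by linarith))
    rw [div_le_div_iff₀ (by linarith) (by linarith)]
    nlinarith
  linarith

lemma arctanh_add {p q : ℝ} (hp0 : 0 ≤ p) (hp1 : p < 1) (hq0 : 0 ≤ q) (hq1 : q < 1) :
    arctanh p + arctanh q = arctanh ((p+q)/(1+p*q)) := by
  have hpq : (0:ℝ) < 1 + p*q := by nlinarith
  have h1 : (1:ℝ) - p ≠ 0 := by linarith
  have h2 : (1:ℝ) - q ≠ 0 := by linarith
  unfold arctanh
  have e1 : 1 + (p+q)/(1+p*q) = (1+p)*(1+q)/(1+p*q) := by field_simp; ring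
  have e2 : 1 - (p+q)/(1+p*q) = (1-p)*(1-q)/(1+p*q) := by field_simp; ring
  rw [e1, e2, show (1+p)*(1+q)/(1+p*q) / ((1-p)*(1-q)/(1+p*q)) = ((1+p)/(1-p)) * ((1+q)/(1-q)) by
    rw [div_div_div_comm, div_self hpq.ne', div_one, div_mul_div_comm]]
  rw [Real.log_mul (ne_of_gt (div_pos (by linarith) (by linarith)))
    (ne_of_gt (div_pos (by linarith) (by linarith)))]
  ring

open Complex in
lemma rho_le_add {b c : ℂ} (hb : b ∈ unitDisc) (hc : c ∈ unitDisc) :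
    rho b c ≤ (‖b‖ + ‖c‖) / (1 + ‖b‖ * ‖c‖) := by
  set p := ‖b‖ with hpdef
  set q := ‖c‖ with hqdef
  set s := ((starRingEnd ℂ) b * c).re with hsdef
  have hp0 : 0 ≤ p := norm_nonneg b
  have hq0 : 0 ≤ q := norm_nonneg c
  have hp1 : p < 1 := hb
  have hq1 : q < 1 := hc
  have hs : |s| ≤ p * q := by
    calc |s| ≤ ‖(starRingEnd ℂ) b * c‖ := Complex.abs_re_le_norm _
    _ = p * q := by rw [norm_mul, Complex.norm_conj]
  have hre : (b * (starRingEnd ℂ) c).re = s := by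
    rw [hsdef, show (starRingEnd ℂ) b * c = (starRingEnd ℂ) (b * (starRingEnd ℂ) c) by
      simp [map_mul], Complex.conj_re]
  have n1 : normSq (b - c) = p^2 + q^2 - 2*s := by
    rw [Complex.normSq_sub, normSq_eq_norm_sq, normSq_eq_norm_sq, hre]
  have n2 : normSq (1 - (starRingEnd ℂ) b * c) = 1 + p^2*q^2 - 2*s := by
    rw [Complex.normSq_sub, normSq_one, normSq_mul, normSq_conj, normSq_eq_norm_sq, normSq_eq_norm_sq]
    simp only [one_mul, map_mul, Complex.conj_conj]
    rw [hre]
  have habs : (0:ℝ) < ‖1 - (starRingEnd ℂ) b * c‖ := by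
    simpa [norm_pos_iff] using my_one_sub_ne hb hc
  have hkey : ‖b - c‖ * (1 + p*q) ≤ (p + q) * ‖1 - (starRingEnd ℂ) b * c‖ := by
    have sq1 : (‖b - c‖ * (1 + p*q))^2 ≤ ((p + q) * ‖1 - (starRingEnd ℂ) b * c‖)^2 := by
      rw [mul_pow, mul_pow, Complex.sq_norm, Complex.sq_norm, n1, n2]
      have hs' : -(p*q) ≤ s := neg_le_of_abs_le hs
      nlinarith [mul_nonneg (mul_nonneg (sub_nonneg.mpr hs') (by nlinarith : (0:ℝ) ≤ 1 - p^2)) (by nlinarith : (0:ℝ) ≤ 1 - q^2)]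
    have h1 : 0 ≤ ‖b - c‖ * (1 + p*q) := by positivity
    have h2 : 0 ≤ (p + q) * ‖1 - (starRingEnd ℂ) b * c‖ := by positivity
    nlinarith
  rw [rho, norm_div, div_le_div_iff₀ habs (by nlinarith)]
  linarith [hkey]

lemma dD_symm (z w : ℂ) : dD z w = dD w z := by rw [dD_eq, dD_eq, rho_symm]

lemma dD_nonneg {z w : ℂ} (hz : z ∈ unitDisc) (hw : w ∈ unitDisc) : 0 ≤ dD z w :=
  arctanh_nonneg' (rho_nonneg z w) (rho_lt_one hz hw)

lemma dD_triangle {z w p : ℂ} (hz : z ∈ unitDisc) (hw : w ∈ unitDisc) (hp : p ∈ unitDisc) :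
    dD z p ≤ dD z w + dD w p := by
  have hb : mob w z ∈ unitDisc := mob_mem hw hz
  have hc : mob w p ∈ unitDisc := mob_mem hw hp
  have hpb1 : rho w z < 1 := rho_lt_one hw hz
  have hqc1 : rho w p < 1 := rho_lt_one hw hp
  have hpb0 : 0 ≤ rho w z := rho_nonneg _ _
  have hqc0 : 0 ≤ rho w p := rho_nonneg _ _
  have hfrac1 : (rho w z + rho w p)/(1 + rho w z * rho w p) < 1 := by
    rw [div_lt_one (by nlinarith)]; nlinarith
  have h1 : rho z p = rho (mob w z) (mob w p) := (rho_mob_invariant hw hz hp).symm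
  have hba : ‖mob w z‖ = rho w z := abs_mob w z
  have hca : ‖mob w p‖ = rho w p := abs_mob w p
  have hle : rho (mob w z) (mob w p) ≤ (rho w z + rho w p)/(1 + rho w z * rho w p) := by
    have := rho_le_add hb hc
    rwa [hba, hca] at this
  calc dD z p = arctanh (rho (mob w z) (mob w p)) := by rw [dD_eq, h1]
    _ ≤ arctanh ((rho w z + rho w p)/(1 + rho w z * rho w p)) :=
        arctanh_le_arctanh (rho_nonneg _ _) hle hfrac1
    _ = arctanh (rho w z) + arctanh (rho w p) := (arctanh_add hpb0 hpb1 hqc0 hqc1).symm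
    _ = dD z w + dD w p := by rw [dD_eq, dD_eq, rho_symm z w]
open Complex

/-- Möbius map from a horizontal half-plane (through `w0`, boundary `Im = a`) to the disc. -/
noncomputable def psi (a : ℝ) (w0 : ℂ) (w : ℂ) : ℂ :=
  (w - w0) / (w - ((starRingEnd ℂ) w0 + ((2*a : ℝ) : ℂ) * Complex.I))

lemma psi_key (a : ℝ) (w0 w : ℂ) :
    normSq (w - ((starRingEnd ℂ) w0 + ((2*a : ℝ) : ℂ) * Complex.I)) - normSq (w - w0)
      = 4*(w.im - a)*(w0.im - a) := by
  simp only [normSq_apply, sub_re, sub_im, add_re, add_im, mul_re, mul_im, I_re, I_im,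
    ofReal_re, ofReal_im, conj_re, conj_im]
  ring

lemma psi_denom_ne {a : ℝ} {w0 w : ℂ} (h : 0 < (w.im - a)*(w0.im - a)) :
    w - ((starRingEnd ℂ) w0 + ((2*a : ℝ) : ℂ) * Complex.I) ≠ 0 := by
  intro hzero
  have hk := psi_key a w0 w
  rw [hzero, map_zero] at hk
  nlinarith [normSq_nonneg (w - w0)]

lemma psi_mem {a : ℝ} {w0 w : ℂ} (h : 0 < (w.im - a)*(w0.im - a)) :
    psi a w0 w ∈ unitDisc := by
  have hne := psi_denom_ne h
  have hk := psi_key a w0 w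
  have hpos : 0 < ‖w - ((starRingEnd ℂ) w0 + ((2*a : ℝ) : ℂ) * Complex.I)‖ := by
    simpa [norm_pos_iff] using hne
  show ‖_‖ < 1
  rw [psi, norm_div, div_lt_one hpos]
  have h1 : normSq (w - w0) < normSq (w - ((starRingEnd ℂ) w0 + ((2*a : ℝ) : ℂ) * Complex.I)) := by
    nlinarith
  rw [normSq_eq_norm_sq, normSq_eq_norm_sq] at h1
  nlinarith [norm_nonneg (w - w0), norm_nonneg (w - ((starRingEnd ℂ) w0 + ((2*a : ℝ) : ℂ) * Complex.I))]

lemma psi_region_of_mem {a : ℝ} {w0 w : ℂ}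
    (hne : w - ((starRingEnd ℂ) w0 + ((2*a : ℝ) : ℂ) * Complex.I) ≠ 0)
    (h : psi a w0 w ∈ unitDisc) : 0 < (w.im - a)*(w0.im - a) := by
  have hpos : 0 < ‖w - ((starRingEnd ℂ) w0 + ((2*a : ℝ) : ℂ) * Complex.I)‖ := by
    simpa [norm_pos_iff] using hne
  have h1 : ‖(w - w0) / (w - ((starRingEnd ℂ) w0 + ((2*a : ℝ) : ℂ) * Complex.I))‖ < 1 := h
  rw [norm_div, div_lt_one hpos] at h1
  have hk := psi_key a w0 w
  have h2 : normSq (w - w0) < normSq (w - ((starRingEnd ℂ) w0 + ((2*a : ℝ) : ℂ) * Complex.I)) := by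
    rw [normSq_eq_norm_sq, normSq_eq_norm_sq]
    nlinarith [norm_nonneg (w - w0)]
  nlinarith

lemma psi_inj {a : ℝ} {w0 : ℂ} (hw0 : w0.im ≠ a) {w w' : ℂ}
    (hw : w - ((starRingEnd ℂ) w0 + ((2*a : ℝ) : ℂ) * Complex.I) ≠ 0)
    (hw' : w' - ((starRingEnd ℂ) w0 + ((2*a : ℝ) : ℂ) * Complex.I) ≠ 0)
    (heq : psi a w0 w = psi a w0 w') : w = w' := by
  set c := (starRingEnd ℂ) w0 + ((2*a : ℝ) : ℂ) * Complex.I with hc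
  have hcw0 : c - w0 ≠ 0 := by
    intro h0
    have : (c - w0).im = 0 := by rw [h0]; rfl
    simp only [hc, sub_im, add_im, conj_im, mul_im, I_im, I_re, ofReal_re, ofReal_im] at this
    apply hw0
    linarith
  rw [psi, psi, div_eq_div_iff hw hw'] at heq
  have h0 : (c - w0) * (w' - w) = 0 := by linear_combination heq
  rcases mul_eq_zero.mp h0 with h | h
  · exact absurd h hcw0
  · exact (sub_eq_zero.mp h).symm

lemma psi_surj {a : ℝ} {w0 : ℂ} (hw0 : w0.im ≠ a) {u : ℂ} (hu : u ∈ unitDisc) :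
    ∃ w : ℂ, 0 < (w.im - a)*(w0.im - a) ∧ psi a w0 w = u := by
  set c := (starRingEnd ℂ) w0 + ((2*a : ℝ) : ℂ) * Complex.I with hc
  have hcw0 : c - w0 ≠ 0 := by
    intro h0
    have : (c - w0).im = 0 := by rw [h0]; rfl
    simp only [hc, sub_im, add_im, conj_im, mul_im, I_im, I_re, ofReal_re, ofReal_im] at this
    apply hw0; linarith
  have hu1 : u ≠ 1 := by
    intro h; rw [h] at hu
    simp [unitDisc] at hu
  have hu1' : u - 1 ≠ 0 := sub_ne_zero.mpr hu1
  refine ⟨(c*u - w0)/(u - 1), ?_, ?_⟩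
  · -- membership in region, derived from psi value in disc
    have hwc : (c*u - w0)/(u - 1) - c = (c - w0)/(u - 1) := by field_simp; ring
    have hne : (c*u - w0)/(u - 1) - c ≠ 0 := by
      rw [hwc]; exact div_ne_zero hcw0 hu1'
    have hval : psi a w0 ((c*u - w0)/(u - 1)) = u := by
      rw [psi, ← hc]
      rw [div_eq_iff hne]
      field_simp
      ring
    apply psi_region_of_mem (by rw [← hc]; exact hne)
    rw [hval]; exact hu
  · have hwc : (c*u - w0)/(u - 1) - c = (c - w0)/(u - 1) := by field_simp; ring
    have hne : (c*u - w0)/(u - 1) - c ≠ 0 := by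
      rw [hwc]; exact div_ne_zero hcw0 hu1'
    rw [psi, ← hc, div_eq_iff hne]
    field_simp
    ring

lemma psi_self (a : ℝ) (w0 : ℂ) : psi a w0 w0 = 0 := by simp [psi]

lemma psi_shift (a : ℝ) (w0 : ℂ) (t : ℝ) :
    psi a w0 (w0 + (t:ℂ)) = (t:ℂ) / ((t:ℂ) + ((2*(w0.im - a) : ℝ) : ℂ) * Complex.I) := by
  rw [psi]
  congr 1
  · ring
  · rw [Complex.ext_iff]
    constructor
    · simp [Complex.sub_re, Complex.add_re, Complex.conj_re, Complex.mul_re]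
    · simp [Complex.sub_im, Complex.add_im, Complex.conj_im, Complex.mul_im]
      ring

lemma abs_psi_shift (a : ℝ) (w0 : ℂ) (t : ℝ) :
    ‖psi a w0 (w0 + (t:ℂ))‖ = |t| / Real.sqrt (t^2 + 4*(w0.im - a)^2) := by
  rw [psi_shift, norm_div, Complex.norm_real]
  congr 1
  rw [Complex.norm_def]
  congr 1
  simp only [normSq_apply, add_re, add_im, ofReal_re, ofReal_im, mul_re, mul_im, I_re, I_im]
  ring
open Topology Filter

open Metric in
lemma inv_contAt {Φ F : ℂ → ℂ} {Δ : Set ℂ} (hΔo : IsOpen Δ)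
    (hdiff : DifferentiableOn ℂ Φ Δ) (hinj : Set.InjOn Φ Δ)
    (hmaps : Set.MapsTo Φ Δ unitDisc)
    (hFmem : ∀ u ∈ unitDisc, F u ∈ Δ) (hFinv : ∀ u ∈ unitDisc, Φ (F u) = u)
    {u : ℂ} (hu : u ∈ unitDisc) : ContinuousAt F u := by
  have hDopen : IsOpen unitDisc := by
    have : unitDisc = ball (0:ℂ) 1 := by
      ext x; simp [unitDisc, mem_ball, Complex.dist_eq]
    rw [this]; exact isOpen_ball
  set w := F u with hwdef
  have hw : w ∈ Δ := hFmem u hu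
  have hΦw : Φ w = u := hFinv u hu
  have hA : AnalyticOnNhd ℂ Φ Δ := hdiff.analyticOnNhd hΔo
  have ht : 𝓝 u ≤ map Φ (𝓝 w) := by
    rcases (hA w hw).eventually_constant_or_nhds_le_map_nhds_aux with hconst | hle
    · exfalso
      have h1 : ∀ᶠ x in 𝓝[≠] w, Φ x = Φ w ∧ x ∈ Δ :=
        eventually_nhdsWithin_of_eventually_nhds (hconst.and (hΔo.eventually_mem hw))
      obtain ⟨x, ⟨hx1, hx2⟩, hx3⟩ := (h1.and self_mem_nhdsWithin).exists
      exact hx3 (hinj hx2 hw hx1)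
    · rwa [hΦw] at hle
  rw [ContinuousAt, Filter.tendsto_def]
  intro s hs
  have hs' : s ∈ 𝓝 w := hs
  have h1 : Φ '' (s ∩ Δ) ∈ map Φ (𝓝 w) := image_mem_map (inter_mem hs' (hΔo.mem_nhds hw))
  refine mem_of_superset (inter_mem (ht h1) (hDopen.mem_nhds hu)) ?_
  rintro x ⟨⟨v, ⟨hv1, hv2⟩, hv3⟩, hx⟩
  have : F x = v := hinj (hFmem x hx) hv2 (by rw [hFinv x hx, hv3])
  simpa [this] using hv1

lemma inv_diffAt_good {Φ F : ℂ → ℂ} {Δ : Set ℂ} (hΔo : IsOpen Δ)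
    (hdiff : DifferentiableOn ℂ Φ Δ) (hinj : Set.InjOn Φ Δ)
    (hmaps : Set.MapsTo Φ Δ unitDisc)
    (hFmem : ∀ u ∈ unitDisc, F u ∈ Δ) (hFinv : ∀ u ∈ unitDisc, Φ (F u) = u)
    {u : ℂ} (hu : u ∈ unitDisc) (hder : deriv Φ (F u) ≠ 0) : DifferentiableAt ℂ F u := by
  set w := F u with hwdef
  have hw : w ∈ Δ := hFmem u hu
  have hΦw : Φ w = u := hFinv u hu
  have hA : AnalyticOnNhd ℂ Φ Δ := hdiff.analyticOnNhd hΔo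
  obtain ⟨p, hp⟩ := hA w hw
  have hsd := hp.hasStrictDerivAt
  have hdval : deriv Φ w = (p 1) fun _ => 1 := hsd.hasDerivAt.deriv
  have hFcomp : ∀ w' ∈ Δ, F (Φ w') = w' := fun w' hw' =>
    hinj (hFmem _ (hmaps hw')) hw' (hFinv _ (hmaps hw'))
  have hev : ∀ᶠ x in 𝓝 w, F (Φ x) = x := by
    filter_upwards [hΔo.eventually_mem hw] with x hx using hFcomp x hx
  have := hsd.to_local_left_inverse (by rw [← hdval]; exact hder) hev
  rw [hΦw] at this
  exact (show HasStrictDerivAt F _ u from this).hasDerivAt.differentiableAt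

lemma inv_diffAt {Φ F : ℂ → ℂ} {Δ : Set ℂ} (hΔo : IsOpen Δ)
    (hdiff : DifferentiableOn ℂ Φ Δ) (hinj : Set.InjOn Φ Δ)
    (hmaps : Set.MapsTo Φ Δ unitDisc)
    (hFmem : ∀ u ∈ unitDisc, F u ∈ Δ) (hFinv : ∀ u ∈ unitDisc, Φ (F u) = u)
    {u : ℂ} (hu : u ∈ unitDisc) : DifferentiableAt ℂ F u := by
  have hDopen : IsOpen unitDisc := by
    have : unitDisc = Metric.ball (0:ℂ) 1 := by
      ext x; simp [unitDisc, Metric.mem_ball, Complex.dist_eq]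
    rw [this]; exact Metric.isOpen_ball
  set w := F u with hwdef
  have hw : w ∈ Δ := hFmem u hu
  have hΦw : Φ w = u := hFinv u hu
  have hA : AnalyticOnNhd ℂ Φ Δ := hdiff.analyticOnNhd hΔo
  by_cases hder : deriv Φ w ≠ 0
  · exact inv_diffAt_good hΔo hdiff hinj hmaps hFmem hFinv hu hder
  push_neg at hder
  rcases ((hA.deriv w hw).eventually_eq_zero_or_eventually_ne_zero) with hzero | hne
  · -- deriv Φ ≡ 0 near w : Φ locally constant, contradicting injectivity
    exfalso
    obtain ⟨ε, hε, hball⟩ := Metric.eventually_nhds_iff_ball.mp (hzero.and (hΔo.eventually_mem hw))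
    have hconst : ∀ x ∈ Metric.ball w ε, Φ x = Φ w := by
      intro x hx
      refine Convex.is_const_of_fderivWithin_eq_zero (convex_ball w ε)
        (hdiff.mono fun y hy => (hball y hy).2) ?_ hx (Metric.mem_ball_self hε)
      intro y hy
      rw [fderivWithin_of_isOpen Metric.isOpen_ball hy, ← toSpanSingleton_deriv, (hball y hy).1]
      ext1; simp
    have h1 : w + (ε/2 : ℝ) ∈ Metric.ball w ε := by
      rw [Metric.mem_ball, Complex.dist_eq]
      have he : w + ((ε/2:ℝ):ℂ) - w = ((ε/2:ℝ):ℂ) := by ring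
      rw [he, Complex.norm_real, Real.norm_of_nonneg (by linarith : (0:ℝ) ≤ ε/2)]
      linarith
    have h2 : (w + (ε/2 : ℝ) : ℂ) ≠ w := by
      intro h
      have hc : ((ε/2 : ℝ) : ℂ) = 0 := add_eq_left.mp h
      exact absurd (by exact_mod_cast hc : (ε/2 : ℝ) = 0) (by linarith)
    exact h2 (hinj (hball _ h1).2 hw (hconst _ h1))
  · -- isolated critical point: removable singularity for F
    have hcont : ContinuousAt F u := inv_contAt hΔo hdiff hinj hmaps hFmem hFinv hu
    obtain ⟨U, hU, hUsub⟩ := eventually_nhdsWithin_iff.mp hne |>.exists_mem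
    have hFU : F ⁻¹' U ∈ 𝓝 u := hcont hU
    set s := F ⁻¹' U ∩ unitDisc with hsdef
    have hs : s ∈ 𝓝 u := inter_mem hFU (hDopen.mem_nhds hu)
    have hdOn : DifferentiableOn ℂ F (s \ {u}) := by
      rintro x ⟨⟨hxU, hxD⟩, hxu⟩
      have hxu' : x ≠ u := hxu
      have hFx : F x ≠ w := by
        intro h
        apply hxu'
        have : Φ (F x) = Φ w := by rw [h]
        rw [hFinv x hxD, hΦw] at this
        exact this
      have hderx : deriv Φ (F x) ≠ 0 := hUsub (F x) hxU hFx
      exact (inv_diffAt_good hΔo hdiff hinj hmaps hFmem hFinv hxD hderx).differentiableWithinAt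
    have := (Complex.differentiableOn_compl_singleton_and_continuousAt_iff hs).mp ⟨hdOn, hcont⟩
    exact this.differentiableAt hs
lemma unitDisc_eq_ball : unitDisc = Metric.ball (0:ℂ) 1 := by
  ext x; simp [unitDisc, Metric.mem_ball, Complex.dist_eq]

lemma isOpen_unitDisc : IsOpen unitDisc := by
  rw [unitDisc_eq_ball]; exact Metric.isOpen_ball

/-- Schwarz–Pick-type estimate centered at 0. -/
lemma schwarz_dD {F : ℂ → ℂ} (hF : ∀ u ∈ unitDisc, DifferentiableAt ℂ F u)
    (hmaps : ∀ u ∈ unitDisc, F u ∈ unitDisc)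
    {u : ℂ} (hu : u ∈ unitDisc) :
    dD (F 0) (F u) ≤ arctanh (‖u‖) := by
  have h0 : (0:ℂ) ∈ unitDisc := by simp [unitDisc]
  set g : ℂ → ℂ := fun v => mob (F 0) (F v) with hgdef
  have hgd : DifferentiableOn ℂ g (Metric.ball 0 1) := by
    intro v hv
    have hv' : v ∈ unitDisc := by rwa [unitDisc_eq_ball]
    have h1 : DifferentiableAt ℂ F v := hF v hv'
    have hFv : F v ∈ unitDisc := hmaps v hv'
    have hden : 1 - (starRingEnd ℂ) (F 0) * F v ≠ 0 := my_one_sub_ne (hmaps 0 h0) hFv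
    apply DifferentiableAt.differentiableWithinAt
    exact ((differentiableAt_const _).sub h1).div
      ((differentiableAt_const _).sub ((differentiableAt_const _).mul h1)) hden
  have hgm : Set.MapsTo g (Metric.ball 0 1) (Metric.ball 0 1) := by
    intro v hv
    have hv' : v ∈ unitDisc := by rwa [unitDisc_eq_ball]
    have := mob_mem (hmaps 0 h0) (hmaps v hv')
    rwa [unitDisc_eq_ball] at this
  have hg0 : g 0 = 0 := by rw [hgdef]; exact mob_self (F 0)
  have hu' : u ∈ Metric.ball (0:ℂ) 1 := by rwa [← unitDisc_eq_ball]
  have hs : ‖g u‖ ≤ ‖u‖ := by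
    simpa using Complex.norm_le_norm_of_mapsTo_ball_self hgd (hgm.mono_right Metric.ball_subset_closedBall) hg0 (mem_ball_zero_iff.mp hu')
  have habs : ‖g u‖ = rho (F 0) (F u) := abs_mob _ _
  rw [dD_eq]
  exact arctanh_le_arctanh (rho_nonneg _ _) (by rw [← habs]; exact hs) hu

lemma arctanh_abs_bound {t y : ℝ} (hy : y ≠ 0) :
    arctanh (|t| / Real.sqrt (t^2 + 4*y^2)) ≤ Real.log (1 + |t|/|y|) := by
  set s := Real.sqrt (t^2 + 4*y^2) with hsdef
  have hy2 : 0 < y^2 := by positivity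
  have hs2 : s^2 = t^2 + 4*y^2 := Real.sq_sqrt (by positivity)
  have hs0 : 0 < s := by
    rw [hsdef]; apply Real.sqrt_pos.mpr; positivity
  have hts : |t| < s := by
    nlinarith [abs_nonneg t, _root_.sq_abs t]
  have hx1 : |t|/s < 1 := by rw [div_lt_one hs0]; exact hts
  have hx0 : 0 ≤ |t|/s := by positivity
  have hsle : s ≤ |t| + 2*|y| := by
    rw [hsdef]
    rw [show t^2 + 4*y^2 = (|t| + 2*|y|)^2 - 4*(|t| * |y|) by
      rw [← _root_.sq_abs t, ← _root_.sq_abs y]; ring]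
    calc Real.sqrt ((|t| + 2*|y|)^2 - 4*(|t| * |y|)) ≤ Real.sqrt ((|t| + 2*|y|)^2) :=
          Real.sqrt_le_sqrt (by nlinarith [abs_nonneg t, abs_nonneg y])
      _ = |t| + 2*|y| := Real.sqrt_sq (by positivity)
  have hE : (1 + |t|/s)/(1 - |t|/s) = (s + |t|)^2/(4*y^2) := by
    rw [div_eq_div_iff (by linarith) (by positivity)]
    field_simp
    linear_combination (_root_.sq_abs t) - hs2
  unfold arctanh
  rw [hE]
  have hyabs : 0 < |y| := abs_pos.mpr hy
  have harg : (s + |t|)^2/(4*y^2) ≤ (1 + |t|/|y|)^2 := by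
    have h1 : (1 + |t|/|y|) = (|y| + |t|)/|y| := by field_simp
    rw [h1, div_pow]
    rw [div_le_div_iff₀ (by positivity) (by positivity)]
    have hyy : y^2 = |y|^2 := (_root_.sq_abs y).symm
    have h2 : (s + |t|)^2 ≤ (2*(|t|+|y|))^2 := pow_le_pow_left₀ (by positivity) (by linarith) 2
    nlinarith [mul_le_mul_of_nonneg_right h2 (sq_nonneg |y|)]
  have hlog : Real.log ((s + |t|)^2/(4*y^2)) ≤ Real.log ((1 + |t|/|y|)^2) :=
    Real.log_le_log (by positivity) harg
  have hfin : Real.log ((1 + |t|/|y|)^2) = 2 * Real.log (1 + |t|/|y|) := by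
    rw [Real.log_pow]
    norm_num
  linarith [hlog, hfin]
open Topology Filter in
lemma tendsto_log_one_add_div {c : ℝ} (hc : 0 < c) :
    Tendsto (fun s : ℝ => Real.log (1 + s/c) / s) atTop (𝓝 0) := by
  have h1 : Tendsto (fun s : ℝ => Real.log (c + s) / s) atTop (𝓝 0) := by
    have ha : Tendsto (fun s : ℝ => c + s) atTop atTop :=
      tendsto_atTop_add_const_left _ c tendsto_id
    have hb : Tendsto (fun s : ℝ => Real.log (c + s) / (c + s)) atTop (𝓝 0) := by
      have := Real.isLittleO_log_id_atTop.tendsto_div_nhds_zero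
      exact (this.comp ha)
    have hcq : Tendsto (fun s : ℝ => (c + s) / s) atTop (𝓝 1) := by
      have heq : (fun s : ℝ => (c + s)/s) =ᶠ[atTop] fun s => c/s + 1 := by
        filter_upwards [eventually_gt_atTop 0] with s hs
        field_simp
      rw [tendsto_congr' heq]
      have h0 : Tendsto (fun s : ℝ => c/s) atTop (𝓝 0) :=
        tendsto_const_nhds.div_atTop tendsto_id
      simpa using h0.add tendsto_const_nhds
    have hmul := hb.mul hcq
    rw [zero_mul] at hmul
    have heq2 : (fun s : ℝ => Real.log (c + s) / (c + s) * ((c + s) / s))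
        =ᶠ[atTop] fun s : ℝ => Real.log (c + s) / s := by
      filter_upwards [eventually_gt_atTop 0] with s hs
      have hcs : c + s ≠ 0 := by positivity
      field_simp
    rwa [tendsto_congr' heq2] at hmul
  have heq : (fun s : ℝ => Real.log (1 + s/c) / s)
      =ᶠ[atTop] fun s => Real.log (c + s)/s - Real.log c / s := by
    filter_upwards [eventually_gt_atTop 0] with s hs
    rw [show 1 + s/c = (c+s)/c by field_simp,
      Real.log_div (by positivity) hc.ne']
    ring
  rw [tendsto_congr' heq]
  have h2 : Tendsto (fun s : ℝ => Real.log c / s) atTop (𝓝 0) :=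
    tendsto_const_nhds.div_atTop tendsto_id
  simpa using h1.sub h2

open Topology Filter in
lemma tendsto_quot {v : ℝ → ℝ} {c : ℝ} (hc : 0 < c)
    (hb : ∀ᶠ t in atBot, 0 ≤ v t ∧ v t ≤ 2 * Real.log (1 + |t|/c)) :
    Tendsto (fun t => v t / t) atBot (𝓝 0) := by
  have hg : Tendsto (fun t : ℝ => 2 * (Real.log (1 + |t|/c) / |t|)) atBot (𝓝 0) := by
    have := (tendsto_log_one_add_div hc).comp tendsto_abs_atBot_atTop
    have h2 := this.const_mul (2:ℝ)
    simpa using h2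
  apply squeeze_zero_norm' ?_ hg
  filter_upwards [hb, eventually_lt_atBot 0] with t hbt htneg
  obtain ⟨h0, h2⟩ := hbt
  have habs : 0 < |t| := abs_pos.mpr htneg.ne
  rw [Real.norm_eq_abs, abs_div, _root_.abs_of_nonneg h0, ← mul_div_assoc]
  gcongr

/-- Corollary 5.4 (ii): for a parabolic petal,
`lim_{t → -∞} v^o_Δ(t)/t = 0` and `lim_{t → -∞} v^T_Δ(t)/t = 0`. -/
theorem stmt10 (φ : ℝ → ℂ → ℂ) (hφ : IsSemigroupD φ) (τ : ℂ)
    (hτ : IsDenjoyWolffBoundary φ τ) (h : ℂ → ℂ) (hh : IsKoenigsNE φ h)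
    (Δ : Set ℂ) (hpar : IsParabolicPetal φ h Δ)
    (hΔbij : ∀ t : ℝ, 0 ≤ t → Set.BijOn (φ t) Δ Δ)
    (hΔback : ∀ t : ℝ, t ≤ 0 → ∀ z ∈ Δ, φ t z ∈ Δ ∧ h (φ t z) = h z + (t : ℂ))
    (z : ℂ) (hz : z ∈ Δ)
    (η : ℝ → ℂ) (hη : IsGeodesicD η) (hη0 : η 0 = z)
    (hη1 : Filter.Tendsto η (nhdsWithin 1 (Set.Iio 1)) (nhds τ))
    (P : ℝ → ℂ) (hP : ∀ t : ℝ, t ≤ 0 → IsProj η (φ t z) (P t)) :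
    Filter.Tendsto (fun t => dD z (P t) / t) Filter.atBot (nhds 0) ∧
    Filter.Tendsto (fun t => geoDist η (φ t z) / t) Filter.atBot (nhds 0) := by
  obtain ⟨hpetal, hhalfplane, hsubΩ, hmax⟩ := hpar
  obtain ⟨a, hH⟩ := hhalfplane
  obtain ⟨hΔne, z₁, hz₁, hΔeq⟩ := hpetal
  have hΔopen : IsOpen Δ := by rw [hΔeq]; exact isOpen_interior.connectedComponentIn
  have hWsub : backwardInvSet φ ⊆ unitDisc := by
    intro x hx
    have h0 : x ∈ φ 0 '' unitDisc := Set.mem_iInter₂.mp hx 0 Set.self_mem_Ici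
    obtain ⟨x', hx', hxx⟩ := h0
    rw [hφ.id0 x' hx'] at hxx
    rwa [← hxx]
  have hΔsub : Δ ⊆ unitDisc := by
    rw [hΔeq]
    exact (connectedComponentIn_subset _ _).trans (interior_subset.trans hWsub)
  have hzU : z ∈ unitDisc := hΔsub hz
  set w0 := h z with hw0
  set y := w0.im - a with hy0
  have hzH : w0 ∈ h '' Δ := ⟨z, hz, rfl⟩
  have hreg : ∀ w ∈ Δ, 0 < ((h w).im - a) * (w0.im - a) := by
    intro w hw
    have hwH : h w ∈ h '' Δ := ⟨w, hw, rfl⟩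
    rcases hH with hgt | hlt
    · rw [hgt] at hwH hzH
      have h1 : a < (h w).im := hwH
      have h2 : a < w0.im := hzH
      exact mul_pos (by linarith) (by linarith)
    · rw [hlt] at hwH hzH
      have h1 : (h w).im < a := hwH
      have h2 : w0.im < a := hzH
      exact mul_pos_of_neg_of_neg (by linarith) (by linarith)
  have hy : y ≠ 0 := by
    have := hreg z hz
    rw [← hw0] at this
    intro h0
    rw [hy0] at h0
    rw [h0, mul_zero] at this
    exact lt_irrefl 0 this
  have hw0a : w0.im ≠ a := fun h0 => hy (by rw [hy0, h0, sub_self])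
  set Φ : ℂ → ℂ := fun w => psi a w0 (h w) with hΦdef
  have hdiffh : ∀ w ∈ Δ, DifferentiableAt ℂ h w := fun w hw =>
    hh.holo.differentiableAt (isOpen_unitDisc.mem_nhds (hΔsub hw))
  have hΦdiff : DifferentiableOn ℂ Φ Δ := by
    intro w hw
    apply DifferentiableAt.differentiableWithinAt
    have hden : h w - ((starRingEnd ℂ) w0 + ((2*a : ℝ) : ℂ) * Complex.I) ≠ 0 :=
      psi_denom_ne (hreg w hw)
    exact ((hdiffh w hw).sub_const _).div ((hdiffh w hw).sub_const _) hden
  have hΦinj : Set.InjOn Φ Δ := by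
    intro w hw w' hw' heq
    have := psi_inj hw0a (psi_denom_ne (hreg w hw)) (psi_denom_ne (hreg w' hw')) heq
    exact hh.inj (hΔsub hw) (hΔsub hw') this
  have hΦmaps : Set.MapsTo Φ Δ unitDisc := fun w hw => psi_mem (hreg w hw)
  have hsurj : ∀ u ∈ unitDisc, ∃ w ∈ Δ, Φ w = u := by
    intro u hu
    obtain ⟨w', hw'reg, hw'val⟩ := psi_surj hw0a hu
    have hw'H : w' ∈ h '' Δ := by
      rcases hH with hgt | hlt
      · rw [hgt]
        have hz' : a < w0.im := by rw [hgt] at hzH; exact hzH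
        have : 0 < w'.im - a := by
          by_contra hcon
          push_neg at hcon
          nlinarith [hw'reg]
        exact (by simpa using this : a < w'.im)
      · rw [hlt]
        have hz' : w0.im < a := by rw [hlt] at hzH; exact hzH
        have : w'.im - a < 0 := by
          by_contra hcon
          push_neg at hcon
          nlinarith [hw'reg]
        exact (by simpa using this : w'.im < a)
    obtain ⟨x, hxΔ, hxw⟩ := hw'H
    exact ⟨x, hxΔ, by rw [hΦdef]; dsimp only; rw [hxw, hw'val]⟩
  set F := Function.invFunOn Φ Δ with hFdef
  have hFmem : ∀ u ∈ unitDisc, F u ∈ Δ := fun u hu =>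
    Function.invFunOn_mem (hsurj u hu)
  have hFinv : ∀ u ∈ unitDisc, Φ (F u) = u := fun u hu =>
    Function.invFunOn_eq (hsurj u hu)
  have hFdiff : ∀ u ∈ unitDisc, DifferentiableAt ℂ F u := fun u hu =>
    inv_diffAt hΔopen hΦdiff hΦinj hΦmaps hFmem hFinv hu
  have hFD : ∀ u ∈ unitDisc, F u ∈ unitDisc := fun u hu => hΔsub (hFmem u hu)
  have h0D : (0:ℂ) ∈ unitDisc := by simp [unitDisc]
  have hΦz : Φ z = 0 := by rw [hΦdef]; dsimp only; rw [← hw0, psi_self]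
  have hF0 : F 0 = z := hΦinj (hFmem 0 h0D) hz (by rw [hFinv 0 h0D, hΦz])
  -- the key distance estimate
  have key : ∀ t : ℝ, t ≤ 0 → dD z (φ t z) ≤ arctanh (|t| / Real.sqrt (t^2 + 4*y^2)) := by
    intro t ht
    obtain ⟨hφtΔ, hφth⟩ := hΔback t ht z hz
    have hu2 : Φ (φ t z) ∈ unitDisc := hΦmaps hφtΔ
    have hval : Φ (φ t z) = psi a w0 (w0 + (t:ℂ)) := by
      rw [hΦdef]; dsimp only; rw [hφth, ← hw0]
    have hFu2 : F (Φ (φ t z)) = φ t z := hΦinj (hFmem _ hu2) hφtΔ (hFinv _ hu2)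
    have hsch := schwarz_dD hFdiff hFD hu2
    rw [hF0, hFu2] at hsch
    calc dD z (φ t z) ≤ arctanh (‖Φ (φ t z)‖) := hsch
      _ = arctanh (|t| / Real.sqrt (t^2 + 4*y^2)) := by
          rw [hval, abs_psi_shift]
  -- geodesic distance facts
  have hbdd : ∀ u ∈ unitDisc, BddBelow (Set.range fun r : Set.Ioo (-1:ℝ) 1 => dD u (η r.1)) := by
    intro u hu
    refine ⟨0, ?_⟩
    rintro x ⟨r, rfl⟩
    exact dD_nonneg hu (hη.mem r.1 r.2)
  have h0mem : (0:ℝ) ∈ Set.Ioo (-1:ℝ) 1 := by norm_num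
  have hgeo_le : ∀ u ∈ unitDisc, geoDist η u ≤ dD u z := by
    intro u hu
    have := ciInf_le (hbdd u hu) (⟨0, h0mem⟩ : Set.Ioo (-1:ℝ) 1)
    simpa [geoDist, hη0] using this
  have hgeo_nonneg : ∀ u ∈ unitDisc, 0 ≤ geoDist η u := by
    intro u hu
    haveI : Nonempty (Set.Ioo (-1:ℝ) 1) := ⟨⟨0, h0mem⟩⟩
    exact le_ciInf fun r => dD_nonneg hu (hη.mem r.1 r.2)
  -- assemble bounds
  have hbound : ∀ t : ℝ, t ≤ 0 →
      (0 ≤ dD z (P t) ∧ dD z (P t) ≤ 2 * Real.log (1 + |t|/|y|)) ∧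
      (0 ≤ geoDist η (φ t z) ∧ geoDist η (φ t z) ≤ 2 * Real.log (1 + |t|/|y|)) := by
    intro t ht
    obtain ⟨hφtΔ, _⟩ := hΔback t ht z hz
    have hφtU : φ t z ∈ unitDisc := hΔsub hφtΔ
    obtain ⟨⟨r, hr, hPr⟩, hPd⟩ := hP t ht
    have hPU : P t ∈ unitDisc := by rw [hPr]; exact hη.mem r hr
    have hlog_nonneg : 0 ≤ Real.log (1 + |t|/|y|) := by
      apply Real.log_nonneg
      have : 0 ≤ |t|/|y| := by positivity
      linarith
    have hδ : dD z (φ t z) ≤ Real.log (1 + |t|/|y|) :=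
      (key t ht).trans (arctanh_abs_bound hy)
    have hgle : geoDist η (φ t z) ≤ dD z (φ t z) := by
      have := hgeo_le (φ t z) hφtU
      rwa [dD_symm (φ t z) z] at this
    refine ⟨⟨dD_nonneg hzU hPU, ?_⟩, ⟨hgeo_nonneg _ hφtU, by linarith⟩⟩
    calc dD z (P t) ≤ dD z (φ t z) + dD (φ t z) (P t) := dD_triangle hzU hφtU hPU
      _ = dD z (φ t z) + geoDist η (φ t z) := by rw [hPd]
      _ ≤ 2 * Real.log (1 + |t|/|y|) := by linarith
  have hyabs : (0:ℝ) < |y| := abs_pos.mpr hy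
  constructor
  · apply tendsto_quot hyabs
    filter_upwards [Filter.eventually_le_atBot 0] with t ht
    exact (hbound t ht).1
  · apply tendsto_quot hyabs
    filter_upwards [Filter.eventually_le_atBot 0] with t ht
    exact (hbound t ht).2
end

section
/- Let Ω ⊊ ℂ be a simply connected domain which is convex in the positive direction, and let w ∈ Ω be such that w + t ∈ Ω for all t ≤ 0 and such that 0 < inf_{t ≤ 0} dist(w + t, ∂Ω) ≤ sup_{t ≤ 0} dist(w + t, ∂Ω) < +∞. Then for every biholomorphism f : Ω → 𝔻, liminf_{t → −∞} d_𝔻(f(w), f(w + t))/log(−t) ≥ 1/4. (This is the lower-bound half of the proof of Theorem 4.3, obtained from the estimate d_Ω(u, v) ≥ (1/4)·log(1 + |u − v|/min{dist(u, ∂Ω), dist(v, ∂Ω)}).) -/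
open Filter Set

/-- `Ω` is a simply connected domain, a proper subdomain of `ℂ`. -/
def IsSCDomain (Ω : Set ℂ) : Prop :=
  IsOpen Ω ∧ IsConnected Ω ∧ Ω ≠ Set.univ ∧ SimplyConnectedSpace Ω


open Metric Complex

section Helpers

noncomputable def moeb (u z : ℂ) : ℂ := (u - z) / (1 - (starRingEnd ℂ) u * z)

lemma normSq_lt_one {u : ℂ} (hu : ‖u‖ < 1) : Complex.normSq u < 1 := by
  have := Complex.sq_norm u; nlinarith [norm_nonneg u]

lemma normSq_identity (u z : ℂ) :
    Complex.normSq (1 - (starRingEnd ℂ) u * z) - Complex.normSq (u - z)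
      = (1 - Complex.normSq u) * (1 - Complex.normSq z) := by
  simp only [Complex.normSq_apply, Complex.mul_re, Complex.mul_im, Complex.sub_re,
    Complex.sub_im, Complex.one_re, Complex.one_im, Complex.conj_re, Complex.conj_im]
  ring

lemma normSq_lt_denom {u z : ℂ} (hu : ‖u‖ < 1) (hz : ‖z‖ < 1) :
    Complex.normSq (u - z) < Complex.normSq (1 - (starRingEnd ℂ) u * z) := by
  have := normSq_identity u z
  nlinarith [normSq_lt_one hu, normSq_lt_one hz]

lemma denom_ne_zero {u z : ℂ} (hu : ‖u‖ < 1) (hz : ‖z‖ < 1) :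
    (1 - (starRingEnd ℂ) u * z) ≠ 0 := by
  intro h
  have h2 := normSq_lt_denom hu hz
  rw [h] at h2
  simp at h2
  nlinarith [Complex.normSq_nonneg (u - z)]

lemma moeb_abs_lt_one {u z : ℂ} (hu : ‖u‖ < 1) (hz : ‖z‖ < 1) :
    ‖moeb u z‖ < 1 := by
  rw [moeb, norm_div, div_lt_one]
  · rw [Complex.norm_def, Complex.norm_def]
    exact Real.sqrt_lt_sqrt (Complex.normSq_nonneg _) (normSq_lt_denom hu hz)
  · exact norm_pos_iff.mpr (denom_ne_zero hu hz)

lemma moeb_zero (u : ℂ) : moeb u 0 = u := by simp [moeb]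

lemma moeb_self (u : ℂ) : moeb u u = 0 := by simp [moeb]

lemma moeb_moeb {u z : ℂ} (hu : ‖u‖ < 1) (hz : ‖z‖ < 1) :
    moeb u (moeb u z) = z := by
  have h2 : (1 - (starRingEnd ℂ) u * moeb u z) ≠ 0 :=
    denom_ne_zero hu (moeb_abs_lt_one hu hz)
  have h1 : (1 - (starRingEnd ℂ) u * z) ≠ 0 := denom_ne_zero hu hz
  rw [moeb] at h2 ⊢
  rw [moeb, div_eq_iff h2]
  have h1' : 1 - z * (starRingEnd ℂ) u ≠ 0 := by rw [mul_comm]; exact h1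
  field_simp
  ring

lemma moeb_differentiableAt {u z : ℂ} (h : (1 - (starRingEnd ℂ) u * z) ≠ 0) :
    DifferentiableAt ℂ (moeb u) z := by
  unfold moeb
  apply DifferentiableAt.div
  · exact (differentiableAt_const u).sub differentiableAt_id
  · exact (differentiableAt_const _).sub ((differentiableAt_const _).mul differentiableAt_id)
  · exact h

lemma mem_ball_iff_abs {z : ℂ} : z ∈ Metric.ball (0:ℂ) 1 ↔ ‖z‖ < 1 := by
  rw [Metric.mem_ball, Complex.dist_eq]; simp

/-- Schwarz–Pick lemma. -/
lemma schwarz_pick {h : ℂ → ℂ} (hd : DifferentiableOn ℂ h (Metric.ball 0 1))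
    (hm : Set.MapsTo h (Metric.ball 0 1) (Metric.ball 0 1))
    {a b : ℂ} (ha : ‖a‖ < 1) (hb : ‖b‖ < 1) :
    ‖moeb (h a) (h b)‖ ≤ ‖moeb a b‖ := by
  have hha : ‖h a‖ < 1 := mem_ball_iff_abs.mp (hm (mem_ball_iff_abs.mpr ha))
  set φ : ℂ → ℂ := (moeb (h a)) ∘ h ∘ (moeb a) with hφ
  have habs : ∀ z : ℂ, ‖z‖ < 1 → ‖h (moeb a z)‖ < 1 := fun z hz =>
    mem_ball_iff_abs.mp (hm (mem_ball_iff_abs.mpr (moeb_abs_lt_one ha hz)))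
  have hdφ : DifferentiableOn ℂ φ (Metric.ball 0 1) := by
    intro z hz
    have hz' : ‖z‖ < 1 := mem_ball_iff_abs.mp hz
    have d1 : DifferentiableAt ℂ (moeb a) z := moeb_differentiableAt (denom_ne_zero ha hz')
    have d2 : DifferentiableAt ℂ h (moeb a z) :=
      hd.differentiableAt (Metric.isOpen_ball.mem_nhds (mem_ball_iff_abs.mpr
        (moeb_abs_lt_one ha hz')))
    have d3 : DifferentiableAt ℂ (moeb (h a)) (h (moeb a z)) :=
      moeb_differentiableAt (denom_ne_zero hha (habs z hz'))
    exact ((d3.comp z (d2.comp z d1)) : DifferentiableAt ℂ φ z).differentiableWithinAt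
  have hmφ : Set.MapsTo φ (Metric.ball 0 1) (Metric.ball 0 1) := by
    intro z hz
    exact mem_ball_iff_abs.mpr (moeb_abs_lt_one hha (habs z (mem_ball_iff_abs.mp hz)))
  have hφ0 : φ 0 = 0 := by
    simp only [hφ, Function.comp_apply, moeb_zero, moeb_self]
  have key := Complex.norm_le_norm_of_mapsTo_ball hdφ (hmφ.mono_right Metric.ball_subset_closedBall) hφ0
    (z := moeb a b) (moeb_abs_lt_one ha hb)
  have : φ (moeb a b) = moeb (h a) (h b) := by
    simp only [hφ, Function.comp_apply, moeb_moeb ha hb]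
  rwa [this] at key

/-- An analytic function has a strict derivative equal to `deriv`. -/
lemma analyticAt_hasStrictDerivAt {f : ℂ → ℂ} {z : ℂ} (h : AnalyticAt ℂ f z) :
    HasStrictDerivAt f (deriv f z) z := by
  obtain ⟨p, hp⟩ := h
  have hs := hp.hasStrictDerivAt
  rw [hs.hasDerivAt.deriv]
  exact hs

/-- An injective holomorphic function on an open set has nonvanishing derivative. -/
lemma deriv_ne_zero_of_injOn {Ω : Set ℂ} (hΩ : IsOpen Ω) {f : ℂ → ℂ}
    (hf : DifferentiableOn ℂ f Ω) (hinj : Set.InjOn f Ω) {z₀ : ℂ} (hz : z₀ ∈ Ω) :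
    deriv f z₀ ≠ 0 := by
  have hA : AnalyticAt ℂ f z₀ := hf.analyticAt (hΩ.mem_nhds hz)
  set F : ℂ → ℂ := fun z => f z - f z₀ with hF_def
  have hFA : AnalyticAt ℂ F z₀ := hA.sub analyticAt_const
  -- two distinct points with equal f values give a contradiction
  have no_two : ∀ z₁ z₂, z₁ ∈ Ω → z₂ ∈ Ω → f z₁ = f z₂ → z₁ = z₂ := fun a b ha hb h =>
    hinj ha hb h
  rcases eq_or_ne (analyticOrderAt F z₀) ⊤ with htop | hne
  · -- f is locally constant: contradiction with injectivity
    exfalso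
    have hev : ∀ᶠ z in nhds z₀, F z = 0 := analyticOrderAt_eq_top.mp htop
    have hev2 : {z | F z = 0} ∩ Ω ∈ nhds z₀ :=
      Filter.inter_mem hev (hΩ.mem_nhds hz)
    obtain ⟨ε, hε, hball⟩ := Metric.mem_nhds_iff.mp hev2
    have hz₁mem : z₀ + ε/2 ∈ Metric.ball z₀ ε := by
      rw [Metric.mem_ball, Complex.dist_eq]
      simp [abs_of_pos hε]
      linarith
    obtain ⟨hF1, hΩ1⟩ := hball hz₁mem
    have : z₀ + ε/2 = z₀ := no_two _ _ hΩ1 hz (by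
      have : f (z₀ + ε/2) - f z₀ = 0 := hF1
      linear_combination this)
    have : (ε/2 : ℂ) = 0 := by linear_combination this
    have : (ε/2 : ℝ) = 0 := by exact_mod_cast congrArg Complex.re this
    linarith
  · obtain ⟨n, hn⟩ := WithTop.ne_top_iff_exists.mp hne
    obtain ⟨g, hg_an, hg0, hfeq⟩ := hFA.analyticOrderAt_eq_natCast.mp hn.symm
    match n, hfeq with
    | 0, hfeq =>
      exfalso
      have h0 := hfeq.self_of_nhds
      simp [hF_def] at h0
      exact hg0 h0.symm
    | 1, hfeq =>
      -- deriv f z₀ = g z₀ ≠ 0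
      have hd : HasDerivAt (fun z => (z - z₀) ^ 1 • g z) (g z₀) z₀ := by
        have h1 : HasDerivAt (fun z : ℂ => (z - z₀) ^ 1) 1 z₀ := by
          simpa using ((hasDerivAt_id z₀).sub_const z₀)
        have h2 : HasDerivAt g (deriv g z₀) z₀ := hg_an.differentiableAt.hasDerivAt
        have := h1.smul h2
        exact this.congr_deriv (by simp)
      have hdF : HasDerivAt F (g z₀) z₀ := by
        apply hd.congr_of_eventuallyEq
        filter_upwards [hfeq] with z hz using hz
      have : deriv F z₀ = g z₀ := hdF.deriv
      have hder : deriv f z₀ = g z₀ := by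
        rw [← this, hF_def]
        simp [deriv_sub_const]
      rw [hder]; exact hg0
    | (k+2), hfeq =>
      exfalso
      set n := k + 2 with hn_def
      have hn2 : 2 ≤ n := by omega
      have hnC : (n : ℂ) ≠ 0 := Nat.cast_ne_zero.mpr (by omega)
      -- root of unity
      set ζ : ℂ := Complex.exp (2 * Real.pi * Complex.I / n) with hζ_def
      have hζn : ζ ^ n = 1 := by
        rw [hζ_def, ← Complex.exp_nat_mul, mul_div_cancel₀ _ hnC, Complex.exp_two_pi_mul_I]
      have hζ1 : ζ ≠ 1 := by
        intro h
        obtain ⟨k', hk'⟩ := Complex.exp_eq_one_iff.mp h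
        have h2pi : (2 * Real.pi * Complex.I : ℂ) ≠ 0 := by
          simp [Complex.I_ne_zero, Real.pi_ne_zero]
        rw [div_eq_iff hnC] at hk'
        have h3 : (1 : ℂ) * (2 * Real.pi * Complex.I)
            = ((k' : ℂ) * n) * (2 * Real.pi * Complex.I) := by linear_combination hk'
        have h4 : (1 : ℂ) = (k' : ℂ) * n := mul_right_cancel₀ h2pi h3
        have h6 : (1 : ℤ) = k' * n := by exact_mod_cast h4
        have h7 : (n : ℤ) ∣ 1 := ⟨k', by linarith [h6, mul_comm k' (n : ℤ)]⟩
        have h8 : (n : ℤ) ≤ 1 := Int.le_of_dvd (by norm_num) h7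
        have : (2 : ℤ) ≤ n := by exact_mod_cast hn2
        omega
      -- main construction
      have one_mem_slit : (1:ℂ) ∈ Complex.slitPlane := by
        simp [Complex.mem_slitPlane_iff]
      set r₀ : ℂ := Complex.exp (Complex.log (g z₀) / n) with hr₀_def
      have hr₀ : r₀ ≠ 0 := Complex.exp_ne_zero _
      have hr₀n : r₀ ^ n = g z₀ := by
        rw [hr₀_def, ← Complex.exp_nat_mul, mul_div_cancel₀ _ hnC, Complex.exp_log hg0]
      set q : ℂ → ℂ := fun z => g z * (g z₀)⁻¹ with hq_def
      have hq0 : q z₀ = 1 := mul_inv_cancel₀ hg0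
      set ψ : ℂ → ℂ := fun z => Complex.exp (Complex.log (q z) / n) * r₀ with hψ_def
      set φ : ℂ → ℂ := fun z => (z - z₀) * ψ z with hφ_def
      have hg_ev : ∀ᶠ z in nhds z₀, AnalyticAt ℂ g z := hg_an.eventually_analyticAt
      have hq_cont : ContinuousAt q z₀ := hg_an.continuousAt.mul continuousAt_const
      have hq_slit : ∀ᶠ z in nhds z₀, q z ∈ Complex.slitPlane := by
        have : Complex.slitPlane ∈ nhds (q z₀) := by
          rw [hq0]; exact Complex.isOpen_slitPlane.mem_nhds one_mem_slit
        exact hq_cont this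
      have hUev : ∀ᶠ z in nhds z₀, (AnalyticAt ℂ g z ∧ q z ∈ Complex.slitPlane) :=
        hg_ev.and hq_slit
      obtain ⟨V, hVsub, hVopen, hVz₀⟩ := _root_.eventually_nhds_iff.mp hUev
      have hφdiff : DifferentiableOn ℂ φ V := by
        intro z hzV
        obtain ⟨hgz, hqz⟩ := hVsub z hzV
        have d1 : DifferentiableAt ℂ q z := hgz.differentiableAt.mul_const _
        have d2 : DifferentiableAt ℂ (fun z => Complex.log (q z)) z :=
          d1.clog hqz
        have d3 : DifferentiableAt ℂ ψ z := ((d2.div_const _).cexp).mul_const _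
        exact ((differentiableAt_id.sub_const z₀).mul d3).differentiableWithinAt
      have hφ_an : AnalyticAt ℂ φ z₀ := hφdiff.analyticAt (hVopen.mem_nhds hVz₀)
      have hψz₀ : ψ z₀ = r₀ := by
        simp only [hψ_def, hq0, Complex.log_one, zero_div, Complex.exp_zero, one_mul]
      have hψd : DifferentiableAt ℂ ψ z₀ := by
        have d1 : DifferentiableAt ℂ q z₀ := hg_an.differentiableAt.mul_const _
        have d2 : DifferentiableAt ℂ (fun z => Complex.log (q z)) z₀ :=
          d1.clog (by rw [hq0]; exact one_mem_slit)
        exact ((d2.div_const _).cexp).mul_const _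
      have hφd : HasDerivAt φ r₀ z₀ := by
        have h1 : HasDerivAt (fun z : ℂ => z - z₀) 1 z₀ := (hasDerivAt_id z₀).sub_const z₀
        have h2 := h1.mul hψd.hasDerivAt
        have h3 : 1 * ψ z₀ + (z₀ - z₀) * deriv ψ z₀ = r₀ := by simp [hψz₀]
        rw [h3] at h2
        exact h2
      have hφ_strict : HasStrictDerivAt φ r₀ z₀ := by
        have hs := analyticAt_hasStrictDerivAt hφ_an
        rwa [hφd.deriv] at hs
      have hmap : Filter.map φ (nhds z₀) = nhds (φ z₀) := hφ_strict.map_nhds_eq hr₀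
      have hφz₀ : φ z₀ = 0 := by simp [hφ_def]
      have hWev : ∀ᶠ z in nhds z₀, (φ z ^ n = F z ∧ z ∈ Ω) := by
        filter_upwards [hfeq, hq_slit, hΩ.mem_nhds hz] with z h1 h2 h3
        refine ⟨?_, h3⟩
        have hqz : q z ≠ 0 := Complex.slitPlane_ne_zero h2
        have hgz0 : g z ≠ 0 := by
          intro h; apply hqz; rw [hq_def]; simp [h]
        have hψn : ψ z ^ n = g z := by
          rw [hψ_def, mul_pow, ← Complex.exp_nat_mul, mul_div_cancel₀ _ hnC,
            Complex.exp_log hqz, hr₀n, hq_def]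
          field_simp
        rw [hφ_def, mul_pow, hψn, h1, smul_eq_mul]
      obtain ⟨W, hWsub, hWopen, hWz₀⟩ := _root_.eventually_nhds_iff.mp hWev
      have himg : φ '' W ∈ nhds (0:ℂ) := by
        rw [← hφz₀, ← hmap]
        exact Filter.image_mem_map (hWopen.mem_nhds hWz₀)
      obtain ⟨ε, hε, hball⟩ := Metric.mem_nhds_iff.mp himg
      have habsζ : ‖ζ‖ = 1 := by
        have hrw : (2 * Real.pi * Complex.I / n : ℂ)
            = ((2 * Real.pi / n : ℝ) : ℂ) * Complex.I := by push_cast; ring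
        rw [hζ_def, hrw, Complex.norm_exp_ofReal_mul_I]
      have hlam : ((ε/2 : ℝ) : ℂ) ∈ Metric.ball (0:ℂ) ε := by
        rw [Metric.mem_ball, Complex.dist_eq]
        simp only [sub_zero, Complex.norm_real, Real.norm_eq_abs]
        rw [abs_of_pos (by linarith)]
        linarith
      have hzetalam : ζ * ((ε/2 : ℝ) : ℂ) ∈ Metric.ball (0:ℂ) ε := by
        rw [Metric.mem_ball, Complex.dist_eq]
        simp only [sub_zero, norm_mul, habsζ, one_mul, Complex.norm_real, Real.norm_eq_abs]
        rw [abs_of_pos (by linarith)]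
        linarith
      obtain ⟨z₁, hz₁W, hφ₁⟩ := hball hlam
      obtain ⟨z₂, hz₂W, hφ₂⟩ := hball hzetalam
      obtain ⟨he₁, hΩ₁⟩ := hWsub z₁ hz₁W
      obtain ⟨he₂, hΩ₂⟩ := hWsub z₂ hz₂W
      have hfz : f z₁ = f z₂ := by
        have e1 : F z₁ = ((ε/2 : ℝ) : ℂ) ^ n := by rw [← he₁, hφ₁]
        have e2 : F z₂ = ((ε/2 : ℝ) : ℂ) ^ n := by
          rw [← he₂, hφ₂, mul_pow, hζn, one_mul]
        have : F z₁ = F z₂ := by rw [e1, e2]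
        simpa [hF_def, sub_left_inj] using this
      have hz12 : z₁ = z₂ := no_two _ _ hΩ₁ hΩ₂ hfz
      have hlamne : ((ε/2 : ℝ) : ℂ) ≠ 0 := by
        simp only [ne_eq, Complex.ofReal_eq_zero]
        linarith
      apply hζ1
      have heq : ζ * ((ε/2 : ℝ) : ℂ) = ((ε/2 : ℝ) : ℂ) := by
        rw [← hφ₂, ← hz12, hφ₁]
      exact mul_right_cancel₀ hlamne (by rw [heq, one_mul])

/-- The inverse of an injective holomorphic bijection onto the disc is holomorphic. -/
lemma exists_holo_inverse {Ω : Set ℂ} (hΩ : IsOpen Ω) {f : ℂ → ℂ}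
    (hf : DifferentiableOn ℂ f Ω) (hbij : Set.BijOn f Ω (Metric.ball 0 1)) :
    ∃ g : ℂ → ℂ, Set.MapsTo g (Metric.ball 0 1) Ω ∧ (∀ z ∈ Ω, g (f z) = z) ∧
      (∀ y ∈ Metric.ball (0:ℂ) 1, f (g y) = y) ∧
      DifferentiableOn ℂ g (Metric.ball 0 1) := by
  set g := Function.invFunOn f Ω with hg_def
  have hInv : Set.InvOn g f Ω (Metric.ball 0 1) := hbij.invOn_invFunOn
  have hmaps : Set.MapsTo g (Metric.ball 0 1) Ω := hbij.surjOn.mapsTo_invFunOn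
  refine ⟨g, hmaps, fun z hz => hInv.1 hz, fun y hy => hInv.2 hy, ?_⟩
  intro y hy
  set z := g y with hz_def
  have hzΩ : z ∈ Ω := hmaps hy
  have hfz : f z = y := hInv.2 hy
  have hstrict : HasStrictDerivAt f (deriv f z) z :=
    analyticAt_hasStrictDerivAt (hf.analyticAt (hΩ.mem_nhds hzΩ))
  have hne : deriv f z ≠ 0 := deriv_ne_zero_of_injOn hΩ hf hbij.injOn hzΩ
  have hglocal : ∀ᶠ x in nhds z, g (f x) = x := by
    filter_upwards [hΩ.mem_nhds hzΩ] with x hx using hInv.1 hx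
  have hgs : HasStrictDerivAt g (deriv f z)⁻¹ (f z) :=
    hstrict.to_local_left_inverse hne hglocal
  rw [hfz] at hgs
  exact (HasStrictDerivAt.hasDerivAt hgs).differentiableAt.differentiableWithinAt



lemma csqrt_re_pos {z : ℂ} (hz : z ∈ Complex.slitPlane) :
    0 < (Complex.exp (Complex.log z / 2)).re := by
  rw [Complex.exp_re]
  apply mul_pos (Real.exp_pos _)
  have him : (Complex.log z / 2).im = Complex.arg z / 2 := by
    have h2 : (Complex.log z / 2) = Complex.log z * ((2⁻¹ : ℝ) : ℂ) := by push_cast; ring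
    rw [h2]
    simp [Complex.mul_im, Complex.log_im]
    ring
  rw [him]
  apply Real.cos_pos_of_mem_Ioo
  constructor
  · have := Complex.neg_pi_lt_arg z
    have hpi := Real.pi_pos
    linarith
  · have h : Complex.arg z < Real.pi := by
      rw [Complex.arg_lt_pi_iff]
      rcases Complex.mem_slitPlane_iff.mp hz with h | h
      · exact Or.inl h.le
      · exact Or.inr h
    have hpi := Real.pi_pos
    linarith

lemma csqrt_sq {z : ℂ} (hz : z ≠ 0) :
    (Complex.exp (Complex.log z / 2)) ^ 2 = z := by
  have h := Complex.exp_nat_mul (Complex.log z / 2) 2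
  have h2 : ((2:ℕ) : ℂ) * (Complex.log z / 2) = Complex.log z := by push_cast; ring
  rw [h2] at h
  rw [← h, Complex.exp_log hz]

lemma cay_denom_ne {v : ℂ} (h : 0 < v.re) : (1 + v) ≠ 0 := by
  intro hv
  have := congrArg Complex.re hv
  simp [Complex.add_re] at this
  linarith

lemma cay_normSq {v : ℂ} (h : 0 < v.re) :
    1 - Complex.normSq ((1 - v)/(1 + v))
      = 4 * v.re / Complex.normSq (1 + v) := by
  rw [Complex.normSq_div]
  have hpos : 0 < Complex.normSq (1 + v) := Complex.normSq_pos.mpr (cay_denom_ne h)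
  field_simp
  simp only [Complex.normSq_apply, Complex.add_re, Complex.add_im, Complex.sub_re,
    Complex.sub_im, Complex.one_re, Complex.one_im]
  ring

lemma cay_abs_lt_one {v : ℂ} (h : 0 < v.re) :
    ‖(1 - v)/(1 + v)‖ < 1 := by
  have hpos : 0 < Complex.normSq (1 + v) := Complex.normSq_pos.mpr (cay_denom_ne h)
  have h1 : 0 < 1 - Complex.normSq ((1 - v)/(1 + v)) := by
    rw [cay_normSq h]
    positivity
  nlinarith [Complex.sq_norm ((1 - v)/(1 + v)), norm_nonneg ((1 - v)/(1 + v))]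

lemma arctanh_mono {x y : ℝ} (hx : 0 ≤ x) (hxy : x ≤ y) (hy : y < 1) :
    arctanh x ≤ arctanh y := by
  unfold arctanh
  have hx1 : x < 1 := lt_of_le_of_lt hxy hy
  apply mul_le_mul_of_nonneg_left _ (by norm_num : (0:ℝ) ≤ 1/2)
  apply Real.log_le_log (by apply div_pos <;> linarith)
  rw [div_le_div_iff₀ (by linarith) (by linarith)]
  nlinarith

lemma arctanh_lower {r e : ℝ} (h1 : r < 1) (h0 : 0 ≤ r) (h2 : 1 - r ≤ e) :
    (1/2) * Real.log (1/e) ≤ arctanh r := by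
  unfold arctanh
  have he : 0 < e := lt_of_lt_of_le (by linarith) h2
  apply mul_le_mul_of_nonneg_left _ (by norm_num : (0:ℝ) ≤ 1/2)
  apply Real.log_le_log (by positivity)
  rw [div_le_div_iff₀ he (by linarith)]
  nlinarith

lemma one_sub_moeb_abs_le {A B : ℂ} (hA : ‖A‖ < 1) (hB : ‖B‖ < 1) :
    1 - ‖moeb A B‖
      ≤ ((1 - Complex.normSq A)/(1 - ‖A‖)^2) * (1 - Complex.normSq B) := by
  have hρ := moeb_abs_lt_one hA hB
  have hρ0 := norm_nonneg (moeb A B)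
  have step1 : 1 - ‖moeb A B‖ ≤ 1 - Complex.normSq (moeb A B) := by
    rw [← Complex.sq_norm]; nlinarith
  have hD := denom_ne_zero hA hB
  have hDpos : 0 < Complex.normSq (1 - (starRingEnd ℂ) A * B) := Complex.normSq_pos.mpr hD
  have step2 : 1 - Complex.normSq (moeb A B)
      = (1 - Complex.normSq A) * (1 - Complex.normSq B)
        / Complex.normSq (1 - (starRingEnd ℂ) A * B) := by
    rw [moeb, Complex.normSq_div, ← normSq_identity A B]
    rw [sub_div, div_self hDpos.ne']
  have habs : 1 - ‖A‖ ≤ ‖1 - (starRingEnd ℂ) A * B‖ := by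
    calc 1 - ‖A‖ ≤ 1 - ‖(starRingEnd ℂ) A * B‖ := by
          rw [norm_mul, Complex.norm_conj]
          nlinarith [norm_nonneg A, norm_nonneg B]
      _ ≤ ‖1 - (starRingEnd ℂ) A * B‖ := by
          have := norm_sub_norm_le (1:ℂ) ((starRingEnd ℂ) A * B)
          simpa using this
  have hden : (1 - ‖A‖)^2 ≤ Complex.normSq (1 - (starRingEnd ℂ) A * B) := by
    rw [← Complex.sq_norm]
    have h0 : (0:ℝ) ≤ 1 - ‖A‖ := by linarith
    nlinarith
  have hXpos : 0 ≤ (1 - Complex.normSq A) * (1 - Complex.normSq B) := by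
    have := normSq_lt_one hA; have := normSq_lt_one hB; nlinarith
  have hApos : (0:ℝ) < (1 - ‖A‖)^2 := by
    have h1 : (0:ℝ) < 1 - ‖A‖ := by linarith
    positivity
  calc 1 - ‖moeb A B‖
      ≤ (1 - Complex.normSq A) * (1 - Complex.normSq B)
        / Complex.normSq (1 - (starRingEnd ℂ) A * B) := by rw [← step2]; exact step1
    _ ≤ (1 - Complex.normSq A) * (1 - Complex.normSq B) / (1 - ‖A‖)^2 :=
        div_le_div_of_nonneg_left hXpos hApos hden
    _ = ((1 - Complex.normSq A)/(1 - ‖A‖)^2) * (1 - Complex.normSq B) := by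
        ring

end Helpers

/- Lower bound half of Theorem 4.3: if `Ω` is convex in the positive direction
and the boundary distance along `{w + t : t ≤ 0}` stays between two positive
constants, then `liminf_{t → -∞} d_Ω(w, w + t)/log(-t) ≥ 1/4`. -/
set_option maxHeartbeats 2000000 in
/-- Lower bound half: liminf ≥ 1/4. -/
theorem stmt15 (Ω : Set ℂ) (hΩ : IsSCDomain Ω)
    (hconv : ∀ u ∈ Ω, ∀ s : ℝ, 0 ≤ s → u + (s : ℂ) ∈ Ω)
    (w : ℂ) (hw : w ∈ Ω) (hwt : ∀ t : ℝ, t ≤ 0 → w + (t : ℂ) ∈ Ω)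
    (m M : ℝ) (hm : 0 < m)
    (hbound : ∀ t : ℝ, t ≤ 0 →
      m ≤ Metric.infDist (w + (t : ℂ)) (frontier Ω) ∧
      Metric.infDist (w + (t : ℂ)) (frontier Ω) ≤ M)
    (f : ℂ → ℂ) (hf : DifferentiableOn ℂ f Ω) (hfbij : Set.BijOn f Ω unitDisc) :
    ((1 / 4 : ℝ) : EReal) ≤
      Filter.liminf
        (fun t : ℝ => ((dD (f w) (f (w + (t : ℂ))) / Real.log (-t) : ℝ) : EReal))
        Filter.atBot := by
  obtain ⟨hopen, hconn, hne_univ, _⟩ := hΩ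
  have hdisc : unitDisc = Metric.ball (0:ℂ) 1 := by
    ext z; simp [unitDisc, Metric.mem_ball, Complex.dist_eq]
  rw [hdisc] at hfbij
  have hM0 : 0 < M := lt_of_lt_of_le hm ((hbound 0 le_rfl).1.trans (hbound 0 le_rfl).2)
  set M' : ℝ := M + 1 with hM'_def
  have hM'1 : 1 ≤ M' := by simp only [hM'_def]; linarith
  have hfr_ne : (frontier Ω).Nonempty := by
    rw [Set.nonempty_iff_ne_empty]
    intro h
    have h1 := (hbound 0 le_rfl).1
    rw [h, Metric.infDist_empty] at h1
    linarith
  obtain ⟨p₀, hp₀fr, hp₀d⟩ : ∃ p ∈ frontier Ω, dist w p < M' := by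
    apply (Metric.infDist_lt_iff hfr_ne).mp
    have h2 := (hbound 0 le_rfl).2
    have h3 : w + ((0:ℝ):ℂ) = w := by simp
    rw [h3] at h2
    simp only [hM'_def]
    linarith
  have hp₀not : p₀ ∉ Ω := by
    intro h
    rw [hopen.frontier_eq] at hp₀fr
    exact hp₀fr.2 h
  have hray : ∀ s : ℝ, 0 ≤ s → p₀ - (s:ℂ) ∉ Ω := by
    intro s hs h
    apply hp₀not
    have h2 := hconv _ h s hs
    simpa using h2
  have hslit : ∀ z ∈ Ω, (z - p₀) ∈ Complex.slitPlane := by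
    intro z hzΩ
    rw [Complex.mem_slitPlane_iff]
    by_contra hcon
    push_neg at hcon
    obtain ⟨h1, h2⟩ := hcon
    have hz_eq : z = p₀ - ((-(z - p₀).re : ℝ) : ℂ) := by
      apply Complex.ext
      · simp [Complex.sub_re]
      · simp only [Complex.sub_im] at h2 ⊢
        simp [h2]
        linarith [h2]
    exact hray _ (by linarith) (hz_eq ▸ hzΩ)
  set sqr : ℂ → ℂ := fun z => Complex.exp (Complex.log (z - p₀) / 2) with hsqr_def
  set Φ : ℂ → ℂ := fun z => (1 - sqr z) / (1 + sqr z) with hPhi_def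
  have hsq_re : ∀ z ∈ Ω, 0 < (sqr z).re := fun z hz => csqrt_re_pos (hslit z hz)
  have hsq_sq : ∀ z ∈ Ω, (sqr z)^2 = z - p₀ := fun z hz =>
    csqrt_sq (Complex.slitPlane_ne_zero (hslit z hz))
  have hPhi_abs : ∀ z ∈ Ω, ‖Φ z‖ < 1 := fun z hz => cay_abs_lt_one (hsq_re z hz)
  have hPhi_diff : DifferentiableOn ℂ Φ Ω := by
    intro z hz
    have d0 : DifferentiableAt ℂ (fun z : ℂ => z - p₀) z := differentiableAt_id.sub_const p₀
    have d1 : DifferentiableAt ℂ (fun z => Complex.log (z - p₀)) z :=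
      d0.clog (hslit z hz)
    have d2 : DifferentiableAt ℂ sqr z := (d1.div_const 2).cexp
    exact (((differentiableAt_const 1).sub d2).div ((differentiableAt_const 1).add d2)
      (cay_denom_ne (hsq_re z hz))).differentiableWithinAt
  obtain ⟨g, hgmaps, hgl, hgr, hgdiff⟩ := exists_holo_inverse hopen hf hfbij
  set h : ℂ → ℂ := Φ ∘ g with hh_def
  have hh_diff : DifferentiableOn ℂ h (Metric.ball 0 1) := by
    intro y hy
    have d1 : DifferentiableAt ℂ g y := hgdiff.differentiableAt (Metric.isOpen_ball.mem_nhds hy)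
    have d2 : DifferentiableAt ℂ Φ (g y) := hPhi_diff.differentiableAt (hopen.mem_nhds (hgmaps hy))
    exact (d2.comp y d1).differentiableWithinAt
  have hh_maps : Set.MapsTo h (Metric.ball 0 1) (Metric.ball 0 1) := by
    intro y hy
    exact mem_ball_iff_abs.mpr (hPhi_abs _ (hgmaps hy))
  have hSP : ∀ t : ℝ, t ≤ 0 →
      ‖moeb (Φ w) (Φ (w + (t:ℂ)))‖ ≤ ‖moeb (f w) (f (w + (t:ℂ)))‖ := by
    intro t ht
    have haw : f w ∈ Metric.ball (0:ℂ) 1 := hfbij.mapsTo hw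
    have hat : f (w + (t:ℂ)) ∈ Metric.ball (0:ℂ) 1 := hfbij.mapsTo (hwt t ht)
    have key := schwarz_pick hh_diff hh_maps (mem_ball_iff_abs.mp haw) (mem_ball_iff_abs.mp hat)
    simp only [hh_def, Function.comp_apply] at key
    rw [hgl w hw, hgl _ (hwt t ht)] at key
    exact key
  set c : ℂ := w - p₀ with hc_def
  have hc_abs : ‖c‖ < M' := by rw [hc_def, ← Complex.dist_eq]; exact hp₀d
  have hc_im : c.im ≠ 0 := by
    intro h0
    set t : ℝ := -(|c.re| + 1) with ht_def
    have habs0 : (0:ℝ) ≤ |c.re| := abs_nonneg _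
    have ht : t ≤ 0 := by simp only [ht_def]; linarith
    have hmem := hslit _ (hwt t ht)
    rw [Complex.mem_slitPlane_iff] at hmem
    have hre : (w + (t:ℂ) - p₀).re = c.re + t := by
      simp [hc_def, Complex.add_re, Complex.sub_re]
      ring
    have him : (w + (t:ℂ) - p₀).im = c.im := by
      simp [hc_def, Complex.add_im, Complex.sub_im]
    rcases hmem with h1 | h1
    · rw [hre] at h1
      have h2 : c.re ≤ |c.re| := le_abs_self _
      have h3 : t = -(|c.re| + 1) := ht_def
      linarith
    · rw [him, h0] at h1
      exact h1 rfl
  have hcre : |c.re| ≤ M' := le_trans (Complex.abs_re_le_norm c) hc_abs.le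
  have hcim : |c.im| ≤ M' := by
    have h1 := Complex.abs_im_le_norm c
    linarith
  set A : ℂ := Φ w with hA_def
  have hA : ‖A‖ < 1 := hPhi_abs w hw
  have hCA_pos : 0 < (1 - Complex.normSq A)/(1 - ‖A‖)^2 := by
    have h1 := normSq_lt_one hA
    have h2 : 0 < 1 - ‖A‖ := by linarith
    apply div_pos (by linarith) (by positivity)
  set CA : ℝ := (1 - Complex.normSq A)/(1 - ‖A‖)^2 with hCA_def
  set K : ℝ := CA * (2 * M') with hK_def
  have hK_pos : 0 < K := by
    rw [hK_def]; exact mul_pos hCA_pos (by linarith)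
  set T₀ : ℝ := max (2*M' + 2) (max 2 (Real.exp ((3/2)*Real.log 2 + Real.log K))) with hT₀_def
  have hev : ∀ᶠ t : ℝ in Filter.atBot,
      ((1/4 : ℝ) : EReal) ≤ ((dD (f w) (f (w + (t:ℂ))) / Real.log (-t) : ℝ) : EReal) := by
    rw [Filter.eventually_atBot]
    refine ⟨-T₀, fun t ht => ?_⟩
    rw [EReal.coe_le_coe_iff]
    set T : ℝ := -t with hT_def
    have hTT₀ : T₀ ≤ T := by simp only [hT_def]; linarith
    have hT2M : 2*M' + 2 ≤ T := le_trans (le_max_left _ _) hTT₀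
    have hT2 : (2:ℝ) ≤ T := le_trans (le_trans (le_max_left _ _) (le_max_right _ _)) hTT₀
    have hTexp : Real.exp ((3/2)*Real.log 2 + Real.log K) ≤ T :=
      le_trans (le_trans (le_max_right _ _) (le_max_right _ _)) hTT₀
    have ht0 : t ≤ 0 := by
      have : (0:ℝ) < T := by linarith
      simp only [hT_def] at this; linarith
    have hwtΩ : w + (t:ℂ) ∈ Ω := hwt t ht0
    set v : ℂ := sqr (w + (t:ℂ)) with hv_def
    have hx : 0 < v.re := hsq_re _ hwtΩ
    have hv2 : v^2 = c + (t:ℂ) := by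
      rw [hv_def, hsq_sq _ hwtΩ, hc_def]; ring
    have hre : v.re^2 - v.im^2 = c.re + t := by
      have h1 := congrArg Complex.re hv2
      simp only [pow_two, Complex.mul_re, Complex.add_re, Complex.ofReal_re] at h1
      nlinarith [h1]
    have him : 2 * (v.re * v.im) = c.im := by
      have h1 := congrArg Complex.im hv2
      simp only [pow_two, Complex.mul_im, Complex.add_im, Complex.ofReal_im] at h1
      linarith [h1]
    have hy2 : T - M' ≤ v.im^2 := by
      have hTt : t = -T := by rw [hT_def]; ring
      nlinarith [sq_nonneg v.re, hre, le_abs_self c.re, hcre]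
    have hy2pos : (0:ℝ) < v.im^2 := by nlinarith [hy2]
    set Y : ℝ := |v.im| with hY_def
    have hYpos : 0 < Y := by
      rw [hY_def, abs_pos]
      intro h0
      rw [h0] at hy2pos
      simp at hy2pos
    have hY2 : Y^2 = v.im^2 := sq_abs v.im
    have hxY : 2 * (v.re * Y) = |c.im| := by
      rw [← him, abs_mul, abs_mul, abs_of_pos hx]
      simp [hY_def, abs_of_pos, mul_assoc]
    set B : ℂ := Φ (w + (t:ℂ)) with hB_def
    have hB_abs : ‖B‖ < 1 := hPhi_abs _ hwtΩ
    have hnsB : 1 - Complex.normSq B = 4 * v.re / Complex.normSq (1 + v) := cay_normSq hx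
    have hden_ge : Y^2 ≤ Complex.normSq (1 + v) := by
      rw [Complex.normSq_apply, Complex.add_re, Complex.add_im, Complex.one_re, Complex.one_im]
      nlinarith [sq_nonneg (1 + v.re), hY2]
    have hnsB_le : 1 - Complex.normSq B ≤ 2 * M' / Y^3 := by
      rw [hnsB]
      have hY2pos : (0:ℝ) < Y^2 := by positivity
      have h1 : 4 * v.re / Complex.normSq (1 + v) ≤ 4 * v.re / Y^2 :=
        div_le_div_of_nonneg_left (by linarith) hY2pos hden_ge
      have h2 : 4 * v.re / Y^2 = 2 * |c.im| / Y^3 := by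
        rw [div_eq_div_iff (by positivity) (by positivity)]
        nlinarith [hxY]
      have h3 : 2 * |c.im| / Y^3 ≤ 2 * M' / Y^3 := by
        apply div_le_div_of_nonneg_right ?_ (by positivity)
        linarith
      linarith
    have hfw : ‖f w‖ < 1 := mem_ball_iff_abs.mp (hfbij.mapsTo hw)
    have hft : ‖f (w + (t:ℂ))‖ < 1 := mem_ball_iff_abs.mp (hfbij.mapsTo hwtΩ)
    set rf : ℝ := ‖moeb (f w) (f (w + (t:ℂ)))‖ with hrf_def
    have hrf1 : rf < 1 := moeb_abs_lt_one hfw hft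
    have hrf0 : 0 ≤ rf := norm_nonneg _
    have hchain : 1 - rf ≤ K / Y^3 := by
      have s1 : ‖moeb A B‖ ≤ rf := hSP t ht0
      have s2 : 1 - ‖moeb A B‖ ≤ CA * (1 - Complex.normSq B) := by
        rw [hCA_def]
        exact one_sub_moeb_abs_le hA hB_abs
      have s3 : CA * (1 - Complex.normSq B) ≤ CA * (2 * M' / Y^3) := by
        apply mul_le_mul_of_nonneg_left hnsB_le (le_of_lt ?_)
        rw [hCA_def]; exact hCA_pos
      have s4 : CA * (2 * M' / Y^3) = K / Y^3 := by rw [hK_def]; ring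
      linarith
    have hdD : (1/2) * Real.log (Y^3/K) ≤ dD (f w) (f (w + (t:ℂ))) := by
      have h1 := arctanh_lower hrf1 hrf0 hchain
      have h2 : (1:ℝ)/(K/Y^3) = Y^3/K := by
        field_simp
      rw [h2] at h1
      exact h1
    have hYlog : Real.log (Y^3/K) = 3 * Real.log Y - Real.log K := by
      rw [Real.log_div (by positivity) (ne_of_gt hK_pos), Real.log_pow]
      push_cast; ring
    have hY_ge : Real.log (T - M') ≤ 2 * Real.log Y := by
      have h1 : Real.log (T - M') ≤ Real.log (Y^2) := by
        apply Real.log_le_log (by nlinarith) (by nlinarith [hY2, hy2])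
      rw [Real.log_pow] at h1; push_cast at h1; linarith
    have hTpos : (0:ℝ) < T := by linarith
    have hlogT_pos : 0 < Real.log T := Real.log_pos (by linarith)
    have hlogTM : Real.log T - Real.log 2 ≤ Real.log (T - M') := by
      have h1 : Real.log (T/2) ≤ Real.log (T - M') := by
        apply Real.log_le_log (by linarith) (by linarith)
      rw [Real.log_div (by linarith) (by norm_num)] at h1; linarith
    have hlogK : (3/2) * Real.log 2 + Real.log K ≤ Real.log T := by
      calc (3/2) * Real.log 2 + Real.log K
          = Real.log (Real.exp ((3/2)*Real.log 2 + Real.log K)) := (Real.log_exp _).symm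
        _ ≤ Real.log T := Real.log_le_log (Real.exp_pos _) hTexp
    have hfinal : (1/4) * Real.log T ≤ dD (f w) (f (w + (t:ℂ))) := by
      have e1 : (3/4) * Real.log (T - M') - (1/2) * Real.log K ≤ (1/2) * Real.log (Y^3/K) := by
        rw [hYlog]; linarith
      linarith
    rw [le_div_iff₀ hlogT_pos]
    linarith
  apply Filter.le_liminf_of_le
  · isBoundedDefault
  · exact hev
end
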